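/- arXiv:1905.05351 — 5 statements merged into one kernel-verified Lean document; each statement's English description precedes it below -/
import Mathlib

section
/- The intrinsic entropy distance between finite probability spaces, defined as the infimum of kd over all couplings, satisfies the triangle inequality: for finite probability spaces X, Y, Z, ikd(X, Z) ≤ ikd(X, Y) + ikd(Y, Z). -/
open scoped BigOperators

/-- Shannon entropy of a finitely supported probability distribution. -/
noncomputable def shannonEntropy {α : Type*} [Fintype α] (p : α → ℝ) : ℝ :=
  -∑ a, p a * Real.log (p a)

/-- `p` is a probability distribution on the finite type `α`. -/
def IsProb {α : Type*} [Fintype α] (p : α → ℝ) : Prop :=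
  (∀ a, 0 ≤ p a) ∧ ∑ a, p a = 1

/-- `K` is a coupling of `p` and `q`. -/
def IsCoupling {α β : Type*} [Fintype α] [Fintype β]
    (p : α → ℝ) (q : β → ℝ) (K : α × β → ℝ) : Prop :=
  IsProb K ∧ (∀ a, ∑ b, K (a, b) = p a) ∧ (∀ b, ∑ a, K (a, b) = q b)

/-- The entropy distance of a coupling `K` of `p` and `q`. -/
noncomputable def kd {α β : Type*} [Fintype α] [Fintype β]
    (p : α → ℝ) (q : β → ℝ) (K : α × β → ℝ) : ℝ :=
  (shannonEntropy K - shannonEntropy p) + (shannonEntropy K - shannonEntropy q)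

/-- The intrinsic entropy distance: the infimum of `kd` over all couplings. -/
noncomputable def ikd {α β : Type*} [Fintype α] [Fintype β]
    (p : α → ℝ) (q : β → ℝ) : ℝ :=
  sInf { d : ℝ | ∃ K : α × β → ℝ, IsCoupling p q K ∧ d = kd p q K }

/-! ### Auxiliary lemmas -/

lemma shannonEntropy_eq {α : Type*} [Fintype α] (p : α → ℝ) :
    shannonEntropy p = ∑ a, Real.negMulLog (p a) := by
  simp [shannonEntropy, Real.negMulLog, Finset.sum_neg_distrib]

lemma shannonEntropy_comp_equiv {α β : Type*} [Fintype α] [Fintype β] (e : α ≃ β) (p : β → ℝ) :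
    shannonEntropy (p ∘ e) = shannonEntropy p := by
  simp only [shannonEntropy_eq]
  exact Fintype.sum_equiv e _ _ (fun a => rfl)

lemma negMulLog_div (t c : ℝ) (ht : 0 ≤ t) (hc : 0 < c) :
    Real.negMulLog (t / c) = Real.negMulLog t / c + (t / c) * Real.log c := by
  rcases eq_or_lt_of_le ht with h0 | hpos
  · simp [Real.negMulLog, ← h0]
  · rw [Real.negMulLog, Real.log_div (ne_of_gt hpos) (ne_of_gt hc), Real.negMulLog]
    field_simp
    ring

/-- Marginal entropy is at most joint entropy. -/
lemma marginal_entropy_le {α β : Type*} [Fintype α] [Fintype β]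
    (K : α × β → ℝ) (hK : ∀ ab, 0 ≤ K ab) :
    shannonEntropy (fun a => ∑ b, K (a, b)) ≤ shannonEntropy K := by
  simp only [shannonEntropy_eq, Fintype.sum_prod_type]
  refine Finset.sum_le_sum fun a _ => ?_
  set s := ∑ b, K (a, b) with hs
  have hs0 : 0 ≤ s := Finset.sum_nonneg fun b _ => hK _
  have : Real.negMulLog s = ∑ b, -(K (a, b) * Real.log s) := by
    simp [Real.negMulLog, ← Finset.sum_mul, hs]
  rw [this]
  refine Finset.sum_le_sum fun b _ => ?_
  rcases eq_or_lt_of_le (hK (a, b)) with h0 | hpos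
  · simp [Real.negMulLog, ← h0]
  · have hle : K (a, b) ≤ s := Finset.single_le_sum (fun b _ => hK (a, b)) (Finset.mem_univ b)
    have := Real.log_le_log hpos hle
    unfold Real.negMulLog
    nlinarith [hpos]

lemma marginal_entropy_le' {α β : Type*} [Fintype α] [Fintype β]
    (K : α × β → ℝ) (hK : ∀ ab, 0 ≤ K ab) :
    shannonEntropy (fun b => ∑ a, K (a, b)) ≤ shannonEntropy K := by
  have h := marginal_entropy_le (K ∘ (Equiv.prodComm β α)) (fun ab => hK _)
  rw [shannonEntropy_comp_equiv] at h
  exact h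

lemma kd_nonneg {α β : Type*} [Fintype α] [Fintype β]
    {p : α → ℝ} {q : β → ℝ} {K : α × β → ℝ} (hK : IsCoupling p q K) :
    0 ≤ kd p q K := by
  have h1 : shannonEntropy p ≤ shannonEntropy K := by
    have := marginal_entropy_le K hK.1.1
    have hp : (fun a => ∑ b, K (a, b)) = p := funext fun a => hK.2.1 a
    rwa [hp] at this
  have h2 : shannonEntropy q ≤ shannonEntropy K := by
    have := marginal_entropy_le' K hK.1.1
    have hq : (fun b => ∑ a, K (a, b)) = q := funext fun b => hK.2.2 b
    rwa [hq] at this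
  unfold kd
  linarith

/-- The product coupling exists. -/
lemma exists_coupling {α β : Type*} [Fintype α] [Fintype β]
    {p : α → ℝ} {q : β → ℝ} (hp : IsProb p) (hq : IsProb q) :
    ∃ K : α × β → ℝ, IsCoupling p q K := by
  refine ⟨fun ab => p ab.1 * q ab.2, ⟨⟨fun ab => mul_nonneg (hp.1 _) (hq.1 _), ?_⟩, ?_, ?_⟩⟩
  · rw [Fintype.sum_prod_type]
    simp only [← Finset.mul_sum, hq.2, mul_one]
    exact hp.2
  · intro a
    simp only [← Finset.mul_sum, hq.2, mul_one]
  · intro b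
    simp only [← Finset.sum_mul, hp.2, one_mul]

section glue
variable {X Y Z : Type*} [Fintype X] [Fintype Y] [Fintype Z]
  (pX : X → ℝ) (pY : Y → ℝ) (pZ : Z → ℝ)
  (K1 : X × Y → ℝ) (K2 : Y × Z → ℝ)

/-- The gluing of two couplings along the common factor `Y`. -/
noncomputable def glue : (X × Z) × Y → ℝ :=
  fun p => K1 (p.1.1, p.2) * K2 (p.2, p.1.2) / pY p.2

variable {pX pY pZ K1 K2}
variable (h1 : IsCoupling pX pY K1) (h2 : IsCoupling pY pZ K2)

include h1 in
lemma K1_zero {x y} (hy : pY y = 0) : K1 (x, y) = 0 := by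
  have := h1.2.2 y
  rw [hy] at this
  exact (Finset.sum_eq_zero_iff_of_nonneg (fun a _ => h1.1.1 (a, y))).mp this x
    (Finset.mem_univ x)

include h2 in
lemma K2_zero {y z} (hy : pY y = 0) : K2 (y, z) = 0 := by
  have := h2.2.1 y
  rw [hy] at this
  exact (Finset.sum_eq_zero_iff_of_nonneg (fun b _ => h2.1.1 (y, b))).mp this z
    (Finset.mem_univ z)

include h1 h2 in
lemma glue_entropy :
    shannonEntropy (glue pY K1 K2) =
      shannonEntropy K1 + shannonEntropy K2 - shannonEntropy pY := by
  have hK1 := h1.1.1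
  have hK2 := h2.1.1
  have key : ∀ y, ∑ x, ∑ z, Real.negMulLog (glue pY K1 K2 ((x, z), y)) =
      (∑ x, Real.negMulLog (K1 (x, y))) + (∑ z, Real.negMulLog (K2 (y, z)))
        - Real.negMulLog (pY y) := by
    intro y
    by_cases hy : pY y = 0
    · simp [glue, hy, K1_zero h1 hy, K2_zero h2 hy, Real.negMulLog]
    · have hY : 0 ≤ pY y := by
        rw [← h1.2.2 y]; exact Finset.sum_nonneg fun a _ => hK1 _
      have hc : 0 < pY y := lt_of_le_of_ne hY (Ne.symm hy)
      have hterm : ∀ x z, Real.negMulLog (glue pY K1 K2 ((x, z), y)) =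
          (K2 (y, z) * Real.negMulLog (K1 (x, y))
            + K1 (x, y) * Real.negMulLog (K2 (y, z))) / pY y
          + (K1 (x, y) * K2 (y, z) / pY y) * Real.log (pY y) := by
        intro x z
        show Real.negMulLog (K1 (x, y) * K2 (y, z) / pY y) = _
        rw [negMulLog_div _ _ (mul_nonneg (hK1 _) (hK2 _)) hc, Real.negMulLog_mul]
      have hz : ∀ x, ∑ z, Real.negMulLog (glue pY K1 K2 ((x, z), y)) =
          Real.negMulLog (K1 (x, y))
            + (K1 (x, y) / pY y) * ∑ z, Real.negMulLog (K2 (y, z))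
            + K1 (x, y) * Real.log (pY y) := by
        intro x
        simp only [hterm]
        rw [Finset.sum_add_distrib, ← Finset.sum_div, Finset.sum_add_distrib,
          ← Finset.sum_mul, ← Finset.mul_sum, h2.2.1 y]
        have : ∑ z, K1 (x, y) * K2 (y, z) / pY y * Real.log (pY y)
            = K1 (x, y) * Real.log (pY y) := by
          rw [← Finset.sum_mul, ← Finset.sum_div, ← Finset.mul_sum, h2.2.1 y]
          field_simp
        rw [this]
        field_simp
      simp only [hz]
      rw [Finset.sum_add_distrib, Finset.sum_add_distrib, ← Finset.sum_mul,
        ← Finset.sum_div, h1.2.2 y, ← Finset.sum_mul, h1.2.2 y]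
      rw [Real.negMulLog]
      field_simp
      ring
  have L : shannonEntropy (glue pY K1 K2) =
      ∑ y, ∑ x, ∑ z, Real.negMulLog (glue pY K1 K2 ((x, z), y)) := by
    rw [shannonEntropy_eq, Fintype.sum_prod_type, Finset.sum_comm]
    simp only [Fintype.sum_prod_type]
  have R1 : shannonEntropy K1 = ∑ y, ∑ x, Real.negMulLog (K1 (x, y)) := by
    rw [shannonEntropy_eq, Fintype.sum_prod_type, Finset.sum_comm]
  have R2 : shannonEntropy K2 = ∑ y, ∑ z, Real.negMulLog (K2 (y, z)) := by
    rw [shannonEntropy_eq, Fintype.sum_prod_type]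
  rw [L, R1, R2, shannonEntropy_eq pY, ← Finset.sum_add_distrib, ← Finset.sum_sub_distrib]
  exact Finset.sum_congr rfl fun y _ => key y

include h1 h2 in
lemma glue_nonneg : ∀ p, 0 ≤ glue pY K1 K2 p := by
  intro p
  have hY : 0 ≤ pY p.2 := by
    rw [← h1.2.2 p.2]; exact Finset.sum_nonneg fun a _ => h1.1.1 _
  exact div_nonneg (mul_nonneg (h1.1.1 _) (h2.1.1 _)) hY

include h1 h2 in
lemma glue_marginal_X (x : X) :
    ∑ z, ∑ y, glue pY K1 K2 ((x, z), y) = pX x := by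
  rw [Finset.sum_comm, ← h1.2.1 x]
  refine Finset.sum_congr rfl fun y _ => ?_
  by_cases hy : pY y = 0
  · simp [glue, hy, K1_zero h1 hy]
  · show (∑ z, K1 (x, y) * K2 (y, z) / pY y) = K1 (x, y)
    rw [← Finset.sum_div, ← Finset.mul_sum, h2.2.1 y]
    field_simp

include h1 h2 in
lemma glue_marginal_Z (z : Z) :
    ∑ x, ∑ y, glue pY K1 K2 ((x, z), y) = pZ z := by
  rw [Finset.sum_comm, ← h2.2.2 z]
  refine Finset.sum_congr rfl fun y _ => ?_
  by_cases hy : pY y = 0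
  · simp [glue, hy, K2_zero h2 hy]
  · show (∑ x, K1 (x, y) * K2 (y, z) / pY y) = K2 (y, z)
    rw [← Finset.sum_div, ← Finset.sum_mul, h1.2.2 y]
    field_simp

include h1 h2 in
lemma glue_coupling (hX : IsProb pX) :
    IsCoupling pX pZ (fun xz => ∑ y, glue pY K1 K2 (xz, y)) := by
  refine ⟨⟨fun xz => Finset.sum_nonneg fun y _ => glue_nonneg h1 h2 _, ?_⟩, ?_, ?_⟩
  · rw [Fintype.sum_prod_type]
    have : ∀ x : X, ∑ z, ∑ y, glue pY K1 K2 ((x, z), y) = pX x :=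
      glue_marginal_X h1 h2
    simp only [this]
    exact hX.2
  · intro x
    exact glue_marginal_X h1 h2 x
  · intro z
    exact glue_marginal_Z h1 h2 z

include h1 h2 in
lemma kd_glue_le :
    kd pX pZ (fun xz => ∑ y, glue pY K1 K2 (xz, y)) ≤ kd pX pY K1 + kd pY pZ K2 := by
  have hle : shannonEntropy (fun xz => ∑ y, glue pY K1 K2 (xz, y))
      ≤ shannonEntropy (glue pY K1 K2) :=
    marginal_entropy_le _ (glue_nonneg h1 h2)
  have heq := glue_entropy h1 h2
  unfold kd
  linarith

end glue

/-- The intrinsic entropy distance satisfies the triangle inequality. -/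
theorem stmt_4 {X Y Z : Type*} [Fintype X] [Fintype Y] [Fintype Z]
    (pX : X → ℝ) (pY : Y → ℝ) (pZ : Z → ℝ)
    (hX : IsProb pX) (hY : IsProb pY) (hZ : IsProb pZ) :
    ikd pX pZ ≤ ikd pX pY + ikd pY pZ := by
  obtain ⟨KXY, hKXY⟩ := exists_coupling hX hY
  obtain ⟨KYZ, hKYZ⟩ := exists_coupling hY hZ
  have hbddXZ : BddBelow { d : ℝ | ∃ K : X × Z → ℝ, IsCoupling pX pZ K ∧ d = kd pX pZ K } :=
    ⟨0, fun d ⟨K, hK, hd⟩ => hd ▸ kd_nonneg hK⟩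
  have main : ∀ K1 : X × Y → ℝ, IsCoupling pX pY K1 →
      ∀ K2 : Y × Z → ℝ, IsCoupling pY pZ K2 →
      ikd pX pZ ≤ kd pX pY K1 + kd pY pZ K2 := by
    intro K1 h1 K2 h2
    have hmem : kd pX pZ (fun xz => ∑ y, glue pY K1 K2 (xz, y)) ∈
        { d : ℝ | ∃ K : X × Z → ℝ, IsCoupling pX pZ K ∧ d = kd pX pZ K } :=
      ⟨_, glue_coupling h1 h2 hX, rfl⟩
    exact le_trans (csInf_le hbddXZ hmem) (kd_glue_le h1 h2)
  have hne1 : { d : ℝ | ∃ K : X × Y → ℝ, IsCoupling pX pY K ∧ d = kd pX pY K }.Nonempty :=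
    ⟨kd pX pY KXY, KXY, hKXY, rfl⟩
  have hne2 : { d : ℝ | ∃ K : Y × Z → ℝ, IsCoupling pY pZ K ∧ d = kd pY pZ K }.Nonempty :=
    ⟨kd pY pZ KYZ, KYZ, hKYZ, rfl⟩
  have step1 : ∀ K1 : X × Y → ℝ, IsCoupling pX pY K1 →
      ikd pX pZ - kd pX pY K1 ≤ ikd pY pZ := by
    intro K1 h1
    refine le_csInf hne2 ?_
    rintro d ⟨K2, h2, rfl⟩
    linarith [main K1 h1 K2 h2]
  have step2 : ikd pX pZ - ikd pY pZ ≤ ikd pX pY := by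
    refine le_csInf hne1 ?_
    rintro d ⟨K1, h1, rfl⟩
    linarith [step1 K1 h1]
  linarith
end

section
/- (Ingleton inequality for abelian groups) Let G be a finite abelian group and H1, H2, H3, H4 subgroups. Define for a family of subgroups the function h(S) := log(|G| / |⋂_{i∈S} H_i|) for nonempty S ⊆ {1,2,3,4}. Then −I(1;2) + I(1;2|3) + I(1;2|4) + I(3;4) ≥ 0, where I(i;j) := h({i}) + h({j}) − h({i,j}) and I(i;j|k) := h({i,k}) + h({j,k}) − h({i,j,k}) − h({k}). -/
open scoped BigOperators

section aux
variable {G : Type*} [CommGroup G] [Fintype G]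

omit [Fintype G] in
/-- Product formula for subgroups of an abelian group. -/
lemma sup_inf_card_aux (A B : Subgroup G) :
    Nat.card (A ⊔ B : Subgroup G) * Nat.card (A ⊓ B : Subgroup G)
      = Nat.card A * Nat.card B := by
  have h1 : Nat.card (B.subgroupOf (A ⊔ B)) * (B.subgroupOf (A ⊔ B)).index
      = Nat.card (A ⊔ B : Subgroup G) := Subgroup.card_mul_index _
  have h2 : Nat.card (B.subgroupOf A) * (B.subgroupOf A).index = Nat.card A :=
    Subgroup.card_mul_index _
  have e1 : Nat.card (B.subgroupOf (A ⊔ B)) = Nat.card B :=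
    Nat.card_congr (Subgroup.subgroupOfEquivOfLe le_sup_right).toEquiv
  have e2 : Nat.card (B.subgroupOf A) = Nat.card (A ⊓ B : Subgroup G) := by
    rw [← Subgroup.inf_subgroupOf_right B A, inf_comm B A]
    exact Nat.card_congr (Subgroup.subgroupOfEquivOfLe inf_le_left).toEquiv
  have e3 : (B.subgroupOf (A ⊔ B)).index = (B.subgroupOf A).index := by
    change B.relIndex (A ⊔ B) = B.relIndex A
    exact Subgroup.relIndex_sup_right A B
  rw [e1, e3] at h1
  rw [e2] at h2
  calc Nat.card (A ⊔ B : Subgroup G) * Nat.card (A ⊓ B : Subgroup G)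
      = Nat.card B * (B.subgroupOf A).index * Nat.card (A ⊓ B : Subgroup G) := by rw [h1]
    _ = Nat.card B * (Nat.card (A ⊓ B : Subgroup G) * (B.subgroupOf A).index) := by ring
    _ = Nat.card B * Nat.card A := by rw [h2]
    _ = Nat.card A * Nat.card B := by ring

lemma log_card_pos_aux (A : Subgroup G) : (0:ℝ) < (Nat.card A : ℝ) := by
  exact_mod_cast Nat.card_pos

lemma log_sup_inf_aux (A B : Subgroup G) :
    Real.log (Nat.card (A ⊔ B : Subgroup G) : ℝ) + Real.log (Nat.card (A ⊓ B : Subgroup G) : ℝ)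
      = Real.log (Nat.card A : ℝ) + Real.log (Nat.card B : ℝ) := by
  have h := sup_inf_card_aux A B
  have := congrArg (fun n : ℕ => Real.log (n : ℝ)) h
  simp only [Nat.cast_mul] at this
  rwa [Real.log_mul (log_card_pos_aux _).ne' (log_card_pos_aux _).ne',
    Real.log_mul (log_card_pos_aux _).ne' (log_card_pos_aux _).ne'] at this

lemma log_card_mono_aux {A B : Subgroup G} (hle : A ≤ B) :
    Real.log (Nat.card A : ℝ) ≤ Real.log (Nat.card B : ℝ) :=
  Real.log_le_log (log_card_pos_aux A)
    (by exact_mod_cast Subgroup.card_le_of_le hle)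

end aux

/-- Ingleton inequality for finite abelian groups: with
`h(S) = log(|G| / |⋂_{i∈S} H_i|)`, the Ingleton expression
`−I(1;2) + I(1;2|3) + I(1;2|4) + I(3;4)` is nonnegative. -/
theorem stmt_8 {G : Type*} [CommGroup G] [Fintype G]
    (H : Fin 4 → Subgroup G) :
    let h : Finset (Fin 4) → ℝ := fun S =>
      Real.log (Nat.card G : ℝ) - Real.log (Nat.card (⨅ i ∈ S, H i : Subgroup G) : ℝ)
    let I : Fin 4 → Fin 4 → ℝ := fun i j => h {i} + h {j} - h {i, j}
    let Ic : Fin 4 → Fin 4 → Fin 4 → ℝ := fun i j k =>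
      h {i, k} + h {j, k} - h {i, j, k} - h {k}
    0 ≤ -I 0 1 + Ic 0 1 2 + Ic 0 1 3 + I 2 3 := by
  intro h I Ic
  simp only [I, Ic, h]
  simp only [Finset.iInf_insert, Finset.iInf_singleton]
  set A := H 0; set B := H 1; set C := H 2; set D := H 3
  set X : Subgroup G := (A ⊓ C) ⊔ (B ⊓ C) with hX
  set Y : Subgroup G := (A ⊓ D) ⊔ (B ⊓ D) with hY
  have iC : (A ⊓ C) ⊓ (B ⊓ C) = A ⊓ (B ⊓ C) := by
    rw [inf_assoc, inf_left_comm C B, inf_idem]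
  have iD : (A ⊓ D) ⊓ (B ⊓ D) = A ⊓ (B ⊓ D) := by
    rw [inf_assoc, inf_left_comm D B, inf_idem]
  have E1 := log_sup_inf_aux (A ⊓ C) (B ⊓ C)
  rw [iC] at E1
  have E2 := log_sup_inf_aux (A ⊓ D) (B ⊓ D)
  rw [iD] at E2
  have E3 := log_sup_inf_aux X Y
  have E4 := log_sup_inf_aux A B
  have L1 : Real.log (Nat.card (X ⊔ Y : Subgroup G) : ℝ)
      ≤ Real.log (Nat.card (A ⊔ B : Subgroup G) : ℝ) := by
    apply log_card_mono_aux
    apply sup_le <;> apply sup_le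
    · exact inf_le_left.trans le_sup_left
    · exact inf_le_left.trans le_sup_right
    · exact inf_le_left.trans le_sup_left
    · exact inf_le_left.trans le_sup_right
  have L2 : Real.log (Nat.card (X ⊓ Y : Subgroup G) : ℝ)
      ≤ Real.log (Nat.card (C ⊓ D : Subgroup G) : ℝ) := by
    apply log_card_mono_aux
    exact inf_le_inf (sup_le inf_le_right inf_le_right) (sup_le inf_le_right inf_le_right)
  linarith [E1, E2, E3, E4, L1, L2]
end

section
/- The entropy vector a_14 := (1,1,1,1; 2,2,2,2,2,2; 3,3,3,3; 3) ∈ R^{Λ_4} (coordinates scaled by 1/log 3) is realized by the abelian group construction: take G = (Z_3)^3 with standard generators χ_1, χ_2, χ_3, and subgroups H_1 = ⟨χ_1, χ_2⟩, H_2 = ⟨χ_2, χ_3⟩, H_3 = ⟨χ_3, χ_1⟩, H_4 = ⟨χ_1 + χ_2, χ_2 + χ_3⟩; then for every nonempty S ⊆ {1,2,3,4}, log_3(|G| / |⋂_{i∈S} H_i|) equals the corresponding coordinate of a_14, i.e., it equals 1 if |S| = 1, 2 if |S| = 2, and 3 if |S| ≥ 3. -/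
abbrev G3 : Type := Fin 3 → ZMod 3

def φ (c : Fin 3 → ZMod 3) : G3 →+ ZMod 3 :=
  AddMonoidHom.mk' (fun v => ∑ i, c i * v i) (fun v w => by
    simp [mul_add, Finset.sum_add_distrib])

instance instK (c : Fin 3 → ZMod 3) : DecidablePred (· ∈ (φ c).ker) := fun v =>
  decidable_of_iff ((φ c) v = 0) (AddMonoidHom.mem_ker).symm

def myc : Fin 4 → Fin 3 → ZMod 3 := ![![0,0,1], ![1,0,0], ![0,1,0], ![1,-1,1]]

abbrev myK : Fin 4 → AddSubgroup G3 := fun i => (φ (myc i)).ker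

def χ' : Fin 3 → G3 := fun i => Pi.single i 1

def myH : Fin 4 → AddSubgroup G3 := ![
      AddSubgroup.closure {χ' 0, χ' 1},
      AddSubgroup.closure {χ' 1, χ' 2},
      AddSubgroup.closure {χ' 2, χ' 0},
      AddSubgroup.closure {χ' 0 + χ' 1, χ' 1 + χ' 2}]

lemma mem_closure_pair {a b v : G3} (m n : ZMod 3) (h : m.val • a + n.val • b = v) :
    v ∈ AddSubgroup.closure {a, b} := by
  subst h
  exact add_mem (nsmul_mem (AddSubgroup.subset_closure (by simp)) _)
    (nsmul_mem (AddSubgroup.subset_closure (by simp)) _)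

lemma hHK : myH = myK := by
  funext i
  fin_cases i <;>
  · apply le_antisymm
    · refine (AddSubgroup.closure_le _).2 ?_
      intro x hx
      simp only [Set.mem_insert_iff, Set.mem_singleton_iff] at hx
      rcases hx with h | h <;> subst h <;> exact AddMonoidHom.mem_ker.mpr (by decide)
    · intro v hv
      simp only [myH, Matrix.cons_val_zero, Matrix.cons_val_one, Matrix.head_cons,
        Matrix.cons_val_two, Matrix.tail_cons, Matrix.cons_val_three]
      first
      | exact mem_closure_pair (v 0) (v 1) (by revert hv; revert v; decide)
      | exact mem_closure_pair (v 1) (v 2) (by revert hv; revert v; decide)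
      | exact mem_closure_pair (v 2) (v 0) (by revert hv; revert v; decide)
      | exact mem_closure_pair (v 0) (v 1 - v 0) (by revert hv; revert v; decide)

instance instInf (A B : AddSubgroup G3) [DecidablePred (· ∈ A)] [DecidablePred (· ∈ B)] :
    DecidablePred (· ∈ A ⊓ B) := fun v =>
  decidable_of_iff (v ∈ A ∧ v ∈ B) (AddSubgroup.mem_inf).symm

lemma key : ∀ S : Finset (Fin 4), S.Nonempty →
    Nat.card (⨅ i ∈ S, myK i : AddSubgroup G3)
      = if S.card = 1 then 9 else if S.card = 2 then 3 else 1 := by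
  intro S hS
  have h : Nat.card (⨅ i ∈ S, myK i : AddSubgroup G3)
      = Nat.card {v : G3 // ∀ i ∈ S, v ∈ myK i} :=
    Nat.card_congr (Equiv.subtypeEquivRight fun v => by
      simp [AddSubgroup.mem_iInf])
  rw [h, Nat.card_eq_fintype_card]
  clear h
  revert hS
  revert S
  decide

/-- The vertex `a₁₄` of the non-Ingleton simplex is realized by the abelian
group `G = (ℤ₃)³` with subgroups `H₁ = ⟨χ₁,χ₂⟩`, `H₂ = ⟨χ₂,χ₃⟩`,
`H₃ = ⟨χ₃,χ₁⟩`, `H₄ = ⟨χ₁+χ₂, χ₂+χ₃⟩`: for every nonempty `S ⊆ {1,2,3,4}`,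
`log₃(|G| / |⋂_{i∈S} H_i|)` equals `1` if `|S| = 1`, `2` if `|S| = 2`, and
`3` if `|S| ≥ 3`. -/
theorem stmt_14 :
    let G := Fin 3 → ZMod 3
    let χ : Fin 3 → G := fun i => Pi.single i 1
    let H : Fin 4 → AddSubgroup G := ![
      AddSubgroup.closure {χ 0, χ 1},
      AddSubgroup.closure {χ 1, χ 2},
      AddSubgroup.closure {χ 2, χ 0},
      AddSubgroup.closure {χ 0 + χ 1, χ 1 + χ 2}]
    ∀ S : Finset (Fin 4), S.Nonempty →
      Real.logb 3 ((Nat.card G : ℝ) / (Nat.card (⨅ i ∈ S, H i : AddSubgroup G) : ℝ))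
        = if S.card = 1 then 1 else if S.card = 2 then 2 else 3 := by
  intro G χ H S hS
  have hH : H = myK := hHK ▸ (rfl : H = myH)
  have hG : Nat.card G = 27 := by rw [Nat.card_eq_fintype_card]; decide
  rw [hH, key S hS, hG]
  split_ifs with h1 h2
  · norm_num [show (27:ℝ)/9 = 3 by norm_num, Real.logb_self_eq_one]
  · push_cast
    rw [show (27:ℝ)/3 = 3^(2:ℕ) by norm_num, Real.logb_pow]
    norm_num [Real.logb_self_eq_one]
  · push_cast
    rw [show (27:ℝ)/1 = 3^(3:ℕ) by norm_num, Real.logb_pow]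
    norm_num [Real.logb_self_eq_one]
end

section
/- For a sequence of nonnegative reals (a_n) satisfying the quasi-linearity bound a_{m+n} ≤ a_m + a_n + C(m+n)^{3/4} for all m, n ≥ 1 and some constant C ≥ 0, the limit lim_{n→∞} a_n/n exists. -/
open Filter

open Real in
lemma two_rpow34 : (2:ℝ) ^ ((3:ℝ)/4) ≤ (169/100:ℝ) := by
  have h4 : ((2:ℝ) ^ ((3:ℝ)/4)) ^ (4:ℕ) = 8 := by
    rw [← Real.rpow_natCast ((2:ℝ) ^ ((3:ℝ)/4)) 4, ← Real.rpow_mul (by norm_num)]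
    norm_num
  apply le_of_pow_le_pow_left₀ (n := 4) (by norm_num) (by norm_num)
  rw [h4]; norm_num

lemma fivehalf_rpow34 : ((5:ℝ)/2) ^ ((3:ℝ)/4) ≤ (199/100:ℝ) := by
  have h4 : (((5:ℝ)/2) ^ ((3:ℝ)/4)) ^ (4:ℕ) = (5/2:ℝ)^(3:ℕ) := by
    rw [← Real.rpow_natCast (((5:ℝ)/2) ^ ((3:ℝ)/4)) 4, ← Real.rpow_mul (by norm_num),
      ← Real.rpow_natCast ((5:ℝ)/2) 3]
    norm_num
  apply le_of_pow_le_pow_left₀ (n := 4) (by norm_num) (by norm_num)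
  rw [h4]; norm_num

-- growth lemma
lemma growth (a : ℕ → ℝ) (C : ℝ) (hC : 0 ≤ C)
    (ha0 : ∀ n, 0 ≤ a n)
    (hsub : ∀ m n : ℕ, 1 ≤ m → 1 ≤ n →
      a (m + n) ≤ a m + a n + C * ((m + n : ℝ)) ^ ((3 : ℝ) / 4)) :
    ∀ n : ℕ, 1 ≤ n →
      a n ≤ (a 1 + a 2 + a 3 + a 4 + 48*C) * n - 12*C*(n:ℝ) ^ ((3:ℝ)/4) := by
  set A := a 1 + a 2 + a 3 + a 4 + 48*C with hA
  have hA0 : 0 ≤ A := by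
    have := ha0 1; have := ha0 2; have := ha0 3; have := ha0 4; nlinarith
  intro n
  induction n using Nat.strong_induction_on with
  | _ n IH =>
    intro hn1
    rcases le_or_gt n 4 with h4 | h5
    · -- base case
      have hle : (n:ℝ) ^ ((3:ℝ)/4) ≤ (n:ℝ) := by
        calc (n:ℝ) ^ ((3:ℝ)/4) ≤ (n:ℝ) ^ ((1:ℝ)) :=
              Real.rpow_le_rpow_of_exponent_le (by exact_mod_cast hn1) (by norm_num)
          _ = (n:ℝ) := Real.rpow_one _
      have hpos : (0:ℝ) ≤ (n:ℝ) ^ ((3:ℝ)/4) := Real.rpow_nonneg (by positivity) _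
      interval_cases n <;>
        · have := ha0 1; have := ha0 2; have := ha0 3; have := ha0 4
          push_cast at hle hpos ⊢
          nlinarith
    · -- inductive step
      set q := n / 2 with hq
      set p := n - q with hp
      have hpq : p + q = n := by omega
      have hq1 : 1 ≤ q := by omega
      have hp1 : 1 ≤ p := by omega
      have hpn : p < n := by omega
      have hqn : q < n := by omega
      have h2p : (n:ℝ) ≤ 2 * p := by
        have : n ≤ 2 * p := by omega
        exact_mod_cast this
      have h5q : 2*(n:ℝ) ≤ 5 * q := by
        have : 2*n ≤ 5 * q := by omega
        exact_mod_cast this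
      have hnR : (0:ℝ) < n := by positivity
      have hn34 : (0:ℝ) ≤ (n:ℝ) ^ ((3:ℝ)/4) := Real.rpow_nonneg (by positivity) _
      -- p^{3/4} ≥ n^{3/4}/(169/100:ℝ)
      have hp34 : (n:ℝ) ^ ((3:ℝ)/4) / (169/100:ℝ) ≤ (p:ℝ) ^ ((3:ℝ)/4) := by
        have h1 : ((n:ℝ)/2) ^ ((3:ℝ)/4) ≤ (p:ℝ) ^ ((3:ℝ)/4) :=
          Real.rpow_le_rpow (by positivity) (by linarith) (by norm_num)
        have h2 : ((n:ℝ)/2) ^ ((3:ℝ)/4) = (n:ℝ) ^ ((3:ℝ)/4) / (2:ℝ) ^ ((3:ℝ)/4) :=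
          Real.div_rpow (x := (n:ℝ)) (y := 2) (by positivity) (by norm_num) ((3:ℝ)/4)
        have h3 : (0:ℝ) < (2:ℝ) ^ ((3:ℝ)/4) := Real.rpow_pos_of_pos (by norm_num) _
        have h5 : (n:ℝ) ^ ((3:ℝ)/4) / (169/100:ℝ) ≤ (n:ℝ) ^ ((3:ℝ)/4) / (2:ℝ) ^ ((3:ℝ)/4) := by
          apply div_le_div_of_nonneg_left hn34 h3 two_rpow34
        linarith [h2 ▸ h1]
      have hq34 : (n:ℝ) ^ ((3:ℝ)/4) / (199/100:ℝ) ≤ (q:ℝ) ^ ((3:ℝ)/4) := by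
        have h1 : ((2*n:ℝ)/5) ^ ((3:ℝ)/4) ≤ (q:ℝ) ^ ((3:ℝ)/4) :=
          Real.rpow_le_rpow (by positivity) (by linarith) (by norm_num)
        have h2 : ((2*(n:ℝ))/5) ^ ((3:ℝ)/4) = (n:ℝ) ^ ((3:ℝ)/4) / ((5:ℝ)/2) ^ ((3:ℝ)/4) := by
          rw [show (2*(n:ℝ))/5 = (n:ℝ) / ((5:ℝ)/2) by ring]
          exact Real.div_rpow (x := (n:ℝ)) (y := (5:ℝ)/2) (by positivity) (by norm_num) ((3:ℝ)/4)
        have h3 : (0:ℝ) < ((5:ℝ)/2) ^ ((3:ℝ)/4) := Real.rpow_pos_of_pos (by norm_num) _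
        have h5 : (n:ℝ) ^ ((3:ℝ)/4) / (199/100:ℝ) ≤ (n:ℝ) ^ ((3:ℝ)/4) / ((5:ℝ)/2) ^ ((3:ℝ)/4) := by
          apply div_le_div_of_nonneg_left hn34 h3 fivehalf_rpow34
        rw [h2] at h1
        linarith
      have hsum : (13/12) * (n:ℝ) ^ ((3:ℝ)/4) ≤ (p:ℝ) ^ ((3:ℝ)/4) + (q:ℝ) ^ ((3:ℝ)/4) := by
        have h := mul_le_mul_of_nonneg_right (by norm_num : (13/12 : ℝ) ≤ 1/(169/100:ℝ) + 1/(199/100:ℝ)) hn34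
        linarith
      have hs := hsub p q hp1 hq1
      rw [hpq] at hs
      have hIp := IH p hpn hp1
      have hIq := IH q hqn hq1
      have hcast : (p:ℝ) + (q:ℝ) = (n:ℝ) := by exact_mod_cast congrArg (Nat.cast : ℕ → ℝ) hpq
      have hscast : (↑(p+q):ℝ) = (n:ℝ) := by exact_mod_cast congrArg (Nat.cast : ℕ → ℝ) hpq
      rw [hcast] at hs
      have hmul := mul_le_mul_of_nonneg_left hsum (by positivity : (0:ℝ) ≤ 12*C)
      have hAc : A * (p:ℝ) + A * (q:ℝ) = A * (n:ℝ) := by rw [← hcast]; ring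
      nlinarith [hs, hIp, hIq, hmul, hAc]
lemma orbit (a : ℕ → ℝ) (C : ℝ) (hC : 0 ≤ C)
    (hsub : ∀ m n : ℕ, 1 ≤ m → 1 ≤ n →
      a (m + n) ≤ a m + a n + C * ((m + n : ℝ)) ^ ((3 : ℝ) / 4))
    (m : ℕ) (hm : 1 ≤ m) :
    ∀ k : ℕ, a (2^k * m) ≤ (2:ℝ)^k * a m
      + 6*C*(m:ℝ)^((3:ℝ)/4) * ((2:ℝ)^k - ((2:ℝ)^k)^((3:ℝ)/4)) := by
  intro k
  induction k with
  | zero => simp [Real.one_rpow]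
  | succ k IH =>
    have hpm : 1 ≤ 2^k * m := Nat.one_le_iff_ne_zero.2 (by positivity)
    have hs := hsub (2^k * m) (2^k * m) hpm hpm
    have hnat : 2^k * m + 2^k * m = 2^(k+1) * m := by ring
    rw [hnat] at hs
    have hcast : ((2^k * m : ℕ):ℝ) + ((2^k * m : ℕ):ℝ) = (2:ℝ)^(k+1) * (m:ℝ) := by
      push_cast; ring
    rw [hcast] at hs
    have hsplit : ((2:ℝ)^(k+1) * (m:ℝ)) ^ ((3:ℝ)/4)
        = (2:ℝ)^((3:ℝ)/4) * ((2:ℝ)^k)^((3:ℝ)/4) * (m:ℝ)^((3:ℝ)/4) := by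
      rw [Real.mul_rpow (by positivity) (by positivity),
        show (2:ℝ)^(k+1) = 2 * (2:ℝ)^k by ring,
        Real.mul_rpow (by norm_num) (by positivity)]
    rw [hsplit] at hs
    have ht : (0:ℝ) ≤ ((2:ℝ)^k)^((3:ℝ)/4) := Real.rpow_nonneg (by positivity) _
    have hms : (0:ℝ) ≤ (m:ℝ)^((3:ℝ)/4) := Real.rpow_nonneg (by positivity) _
    have hr := two_rpow34
    have hr0 : (0:ℝ) ≤ (2:ℝ)^((3:ℝ)/4) := Real.rpow_nonneg (by norm_num) _
    have key : 0 ≤ C * (m:ℝ)^((3:ℝ)/4) * ((2:ℝ)^k)^((3:ℝ)/4) * (12 - 7 * (2:ℝ)^((3:ℝ)/4)) :=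
      mul_nonneg (mul_nonneg (mul_nonneg hC hms) ht) (by linarith)
    have hexp : (2:ℝ)^(k+1) = 2 * (2:ℝ)^k := by ring
    have h2 : ((2:ℝ)^(k+1))^((3:ℝ)/4) = (2:ℝ)^((3:ℝ)/4) * ((2:ℝ)^k)^((3:ℝ)/4) := by
      rw [hexp, Real.mul_rpow (by norm_num) (by positivity)]
    rw [h2, hexp]
    nlinarith [hs, IH, key]

set_option maxHeartbeats 1000000 in
/-- Approximate Fekete lemma: for a nonnegative sequence with
`a (m+n) ≤ a m + a n + C (m+n)^{3/4}`, the limit of `a n / n` exists. -/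
theorem stmt_18 (a : ℕ → ℝ) (C : ℝ) (hC : 0 ≤ C)
    (ha0 : ∀ n, 0 ≤ a n)
    (hsub : ∀ m n : ℕ, 1 ≤ m → 1 ≤ n →
      a (m + n) ≤ a m + a n + C * ((m + n : ℝ)) ^ ((3 : ℝ) / 4)) :
    ∃ L : ℝ, Tendsto (fun n : ℕ => a n / n) atTop (nhds L) := by
  have hgrow := growth a C hC ha0 hsub
  set A := a 1 + a 2 + a 3 + a 4 + 48*C with hAdef
  have hA0 : 0 ≤ A := by
    have := ha0 1; have := ha0 2; have := ha0 3; have := ha0 4; nlinarith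
  set f : ℕ → ℝ := fun n => a n / n with hfdef
  have hf0 : ∀ n, 0 ≤ f n := fun n => div_nonneg (ha0 n) (Nat.cast_nonneg n)
  have hfA : ∀ n, f n ≤ A := by
    intro n
    rcases Nat.eq_zero_or_pos n with h0 | h1
    · show a n / (n:ℝ) ≤ A
      rw [h0]; simpa using hA0
    · have hn : (0:ℝ) < n := by exact_mod_cast h1
      show a n / (n:ℝ) ≤ A
      rw [div_le_iff₀ hn]
      have h34 : (0:ℝ) ≤ 12*C*(n:ℝ)^((3:ℝ)/4) := by positivity
      nlinarith [hgrow n h1]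
  have hbdd : IsBoundedUnder (· ≤ ·) atTop f := Filter.isBoundedUnder_of ⟨A, hfA⟩
  have hbdd' : IsBoundedUnder (· ≥ ·) atTop f := Filter.isBoundedUnder_of ⟨0, hf0⟩
  have hcob : IsCoboundedUnder (· ≤ ·) atTop f := hbdd'.isCoboundedUnder_le
  set L := limsup f atTop with hLdef
  have hL0 : 0 ≤ L := le_limsup_of_frequently_le (Filter.Frequently.of_forall hf0) hbdd
  -- main claim : eventual lower bound
  have main : ∀ ε : ℝ, 0 < ε → ∀ᶠ n in atTop, L - ε ≤ f n := by
    intro ε hε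
    by_contra hcon
    rw [Filter.not_eventually] at hcon
    have hfreq : ∃ᶠ n in atTop, f n < L - ε := hcon.mono (fun n h => by linarith [not_le.1 h])
    set δ := ε/16 with hδdef
    have hδ0 : 0 < δ := by positivity
    have hup : ∀ᶠ n in atTop, f n < L + δ := eventually_lt_of_limsup_lt (by linarith) hbdd
    obtain ⟨N₀, hN₀⟩ := Filter.eventually_atTop.1 hup
    set N₁ := max N₀ 1 with hN₁def
    set B₀ := ∑ j ∈ Finset.range N₁, a j with hBdef
    have hB0 : 0 ≤ B₀ := Finset.sum_nonneg (fun j _ => ha0 j)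
    have hglob : ∀ j : ℕ, a j ≤ (L+δ)*j + B₀ := by
      intro j
      rcases lt_or_ge j N₁ with hj | hj
      · have h1 : a j ≤ B₀ := Finset.single_le_sum (fun i _ => ha0 i) (Finset.mem_range.2 hj)
        have h2 : 0 ≤ (L+δ)*(j:ℝ) := mul_nonneg (by linarith) (Nat.cast_nonneg j)
        linarith
      · have hj1 : 1 ≤ j := le_trans (le_max_right _ _) hj
        have hjpos : (0:ℝ) < j := by exact_mod_cast hj1
        have h3 : f j < L + δ := hN₀ j (le_trans (le_max_left _ _) hj)
        have h4 : a j / (j:ℝ) < L + δ := h3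
        have h5 := (div_lt_iff₀ hjpos).1 h4
        linarith
    -- eventual smallness
    have hpow : Tendsto (fun n : ℕ => (n:ℝ)^((1:ℝ)/4)) atTop atTop :=
      (tendsto_rpow_atTop (by norm_num)).comp tendsto_natCast_atTop_atTop
    have hev6 : ∀ᶠ n : ℕ in atTop, 6*C*(n:ℝ)^((3:ℝ)/4) ≤ δ*n := by
      filter_upwards [hpow.eventually_ge_atTop (6*C/δ), Filter.eventually_ge_atTop 1]
        with n h1 hn1
      have hn0 : (0:ℝ) < n := by exact_mod_cast hn1
      have h34 : (0:ℝ) ≤ (n:ℝ)^((3:ℝ)/4) := Real.rpow_nonneg (by positivity) _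
      have h2 : 6*C ≤ δ * (n:ℝ)^((1:ℝ)/4) := by
        rw [div_le_iff₀ hδ0] at h1; linarith
      have hid : (n:ℝ)^((1:ℝ)/4) * (n:ℝ)^((3:ℝ)/4) = (n:ℝ) := by
        rw [← Real.rpow_add hn0]; norm_num
      calc 6*C*(n:ℝ)^((3:ℝ)/4) ≤ (δ * (n:ℝ)^((1:ℝ)/4)) * (n:ℝ)^((3:ℝ)/4) :=
            mul_le_mul_of_nonneg_right h2 h34
        _ = δ * ((n:ℝ)^((1:ℝ)/4) * (n:ℝ)^((3:ℝ)/4)) := by ring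
        _ = δ * n := by rw [hid]
    have hevB : ∀ᶠ n : ℕ in atTop, B₀ ≤ δ*n := by
      filter_upwards [Filter.eventually_ge_atTop ⌈B₀/δ⌉₊] with n hn
      have h1 : B₀/δ ≤ (n:ℝ) := le_trans (Nat.le_ceil _) (by exact_mod_cast hn)
      rw [div_le_iff₀ hδ0] at h1; linarith
    -- choose m
    obtain ⟨m, hfm, h6m, hm1⟩ :=
      (hfreq.and_eventually (hev6.and (Filter.eventually_ge_atTop 1))).exists
    have hm0 : (0:ℝ) < m := by exact_mod_cast hm1
    have ham : a m ≤ (L - ε)*m := by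
      have h4 : a m / (m:ℝ) < L - ε := hfm
      have := (div_lt_iff₀ hm0).1 h4
      linarith
    have hm34 : (0:ℝ) ≤ (m:ℝ)^((3:ℝ)/4) := Real.rpow_nonneg (by positivity) _
    have horb := orbit a C hC hsub m hm1
    have hP : ∀ k : ℕ, a (2^k * m) ≤ (L - ε + δ) * ((2:ℝ)^k * m) := by
      intro k
      have h1 := horb k
      have h2k : (0:ℝ) ≤ (2:ℝ)^k := by positivity
      have ht : (0:ℝ) ≤ ((2:ℝ)^k)^((3:ℝ)/4) := Real.rpow_nonneg (by positivity) _
      have h2 := mul_le_mul_of_nonneg_left ham h2k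
      have h3 := mul_le_mul_of_nonneg_left h6m h2k
      nlinarith [mul_nonneg (mul_nonneg (mul_nonneg (by norm_num : (0:ℝ) ≤ 6) hC) hm34) ht]
    -- key bound for all n ≥ m
    have hkey : ∀ n : ℕ, m ≤ n →
        a n ≤ (L + δ - ε/2)*n + B₀ + C*(n:ℝ)^((3:ℝ)/4) := by
      intro n hn
      have hn1 : 1 ≤ n := le_trans hm1 hn
      have hnm : 1 ≤ n / m := (Nat.one_le_div_iff (by omega)).2 hn
      set k := Nat.log 2 (n / m) with hk
      have hk1 : 2^k ≤ n / m := Nat.pow_log_le_self 2 (by omega)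
      have hk2 : n / m < 2^(k+1) := Nat.lt_pow_succ_log_self (by norm_num) _
      have hp_le : 2^k * m ≤ n :=
        le_trans (Nat.mul_le_mul_right m hk1) (Nat.div_mul_le_self n m)
      have hlt : n < 2^(k+1) * m := by
        have h := (Nat.div_lt_iff_lt_mul (by omega : 0 < m)).1 hk2
        linarith [h, mul_comm (2^(k+1)) m]
      set p := 2^k * m with hpdef
      have hp1 : 1 ≤ p := Nat.one_le_iff_ne_zero.2 (by positivity)
      set r := n - p with hrdef
      have hnpr : n = p + r := by omega
      have h2p : n < 2 * p := by
        have : 2^(k+1) * m = 2 * p := by rw [hpdef]; ring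
        omega
      have hpcast : ((p:ℕ):ℝ) = (2:ℝ)^k * (m:ℝ) := by rw [hpdef]; push_cast; ring
      have hap : a p ≤ (L - ε + δ) * (p:ℝ) := by rw [hpcast]; exact hP k
      have hn34 : (0:ℝ) ≤ (n:ℝ)^((3:ℝ)/4) := Real.rpow_nonneg (by positivity) _
      have hnR : (0:ℝ) ≤ (n:ℝ) := Nat.cast_nonneg n
      have hpn2 : (n:ℝ) < 2*(p:ℝ) := by exact_mod_cast h2p
      rcases Nat.eq_zero_or_pos r with hr0 | hr1
      · have hnp : n = p := by omega
        rw [hnp]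
        have hpeqn : (p:ℝ) = (n:ℝ) := by rw [hnp]
        nlinarith [hap, hB0, mul_nonneg hC (Real.rpow_nonneg (Nat.cast_nonneg p) ((3:ℝ)/4)),
          mul_nonneg hε.le (Nat.cast_nonneg p)]
      · have hs := hsub p r hp1 hr1
        have hprn : p + r = n := by omega
        rw [hprn] at hs
        have hcastpr : (p:ℝ) + (r:ℝ) = (n:ℝ) := by exact_mod_cast congrArg (Nat.cast : ℕ → ℝ) hprn
        rw [hcastpr] at hs
        have har := hglob r
        have hεn : ε * (n:ℝ) ≤ ε * (2*(p:ℝ)) := mul_le_mul_of_nonneg_left hpn2.le hε.le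
        have e1 : (L+δ)*((p:ℝ)+(r:ℝ)) = (L+δ)*(n:ℝ) := by rw [hcastpr]
        nlinarith [hap, har, hs, hεn, e1, hB0]
    -- conclude eventual upper bound below L
    have hev : ∀ᶠ n : ℕ in atTop, f n ≤ L - ε/4 := by
      filter_upwards [hev6, hevB, Filter.eventually_ge_atTop (max m 1)] with n h6 hB hn
      have hnm : m ≤ n := le_trans (le_max_left _ _) hn
      have hn1 : 1 ≤ n := le_trans (le_max_right _ _) hn
      have hn0 : (0:ℝ) < n := by exact_mod_cast hn1
      have h := hkey n hnm
      have hn34 : (0:ℝ) ≤ (n:ℝ)^((3:ℝ)/4) := Real.rpow_nonneg (by positivity) _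
      have hc : C*(n:ℝ)^((3:ℝ)/4) ≤ δ*n := by nlinarith [mul_nonneg hC hn34]
      show a n / (n:ℝ) ≤ L - ε/4
      rw [div_le_iff₀ hn0]
      have hδε : δ = ε/16 := hδdef
      nlinarith [h, hB, hc, mul_nonneg hε.le hn0.le]
    have hle : L ≤ L - ε/4 := limsup_le_of_le hcob hev
    linarith
  refine ⟨L, ?_⟩
  rw [Metric.tendsto_atTop]
  intro ε hε
  have hupper : ∀ᶠ n in atTop, f n < L + ε/2 :=
    eventually_lt_of_limsup_lt (by linarith) hbdd
  have hlower := main (ε/2) (by linarith)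
  obtain ⟨N, hN⟩ := Filter.eventually_atTop.1 (hupper.and hlower)
  refine ⟨N, fun n hn => ?_⟩
  obtain ⟨h1, h2⟩ := hN n hn
  rw [Real.dist_eq, abs_sub_lt_iff]
  constructor <;> [skip; skip] <;> linarith
end

section
/- Let B be a normed real vector space and d(x,y) := ‖x − y‖ the induced metric on a subset P ⊆ B that is closed under addition and nonnegative scalar multiplication. Then the metric d restricted to P is translation-invariant (d(x + z, y + z) = d(x, y)) and 1-homogeneous (d(λx, λy) = λ d(x,y) for λ ≥ 0). Conversely, if a convex cone P with an intrinsically given metric d is translation-invariant, 1-homogeneous, and complete, and addition is cancellative, then P embeds isometrically as a closed convex cone in a Banach space. -/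
open scoped NNReal

/-- An isometric embedding of a metric convex cone `P` as a closed convex cone
in a Banach space: a complete normed real vector space `B` together with an
isometric, additive, `ℝ≥0`-homogeneous map `f : P → B` with closed range. -/
structure BanachConeEmbedding (P : Type*) [AddCommMonoid P] [Module ℝ≥0 P]
    [MetricSpace P] where
  B : Type
  [instNorm : NormedAddCommGroup B]
  [instSpace : NormedSpace ℝ B]
  complete : CompleteSpace B
  f : P → B
  isom : ∀ x y : P, dist (f x) (f y) = dist x y
  map_add : ∀ x y : P, f (x + y) = f x + f y
  map_smul : ∀ (c : ℝ≥0) (x : P), f (c • x) = (c : ℝ) • f x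
  closedRange : IsClosed (Set.range f)

namespace Stmt19Aux

variable (P : Type) [AddCommMonoid P] [IsCancelAdd P] [Module ℝ≥0 P]

/-- The Grothendieck relation on `P × P`. -/
def rel (x y : P × P) : Prop := x.1 + y.2 = y.1 + x.2

theorem rel_equiv : Equivalence (rel P) := by
  constructor
  · intro x; rfl
  · intro x y h; exact h.symm
  · intro x y z h1 h2
    unfold rel at *
    apply add_left_cancel (a := y.1 + y.2)
    calc y.1 + y.2 + (x.1 + z.2) = (x.1 + y.2) + (y.1 + z.2) := by abel
    _ = (y.1 + x.2) + (z.1 + y.2) := by rw [h1, h2]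
    _ = y.1 + y.2 + (z.1 + x.2) := by abel

instance coneSetoid : Setoid (P × P) := ⟨rel P, rel_equiv P⟩

/-- Grothendieck group of the cone. -/
def G : Type := Quotient (coneSetoid P)

variable {P}

def mk (a b : P) : G P := Quotient.mk (coneSetoid P) (a, b)

theorem mk_eq_mk {a b c d : P} : mk a b = mk c d ↔ a + d = c + b := by
  constructor
  · intro h; exact Quotient.exact h
  · intro h; exact Quotient.sound h

theorem ind {motive : G P → Prop} (h : ∀ a b : P, motive (mk a b)) : ∀ x, motive x := by
  intro x
  induction x using Quotient.ind with
  | _ p => exact h p.1 p.2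

instance : Zero (G P) := ⟨mk 0 0⟩

theorem zero_def : (0 : G P) = mk 0 0 := rfl

instance : Add (G P) :=
  ⟨Quotient.map₂ (fun x y => (x.1 + y.1, x.2 + y.2)) (by
    rintro ⟨a, b⟩ ⟨a', b'⟩ h ⟨c, d⟩ ⟨c', d'⟩ h'
    simp only [HasEquiv.Equiv, Setoid.r, rel] at *
    calc a + c + (b' + d') = (a + b') + (c + d') := by abel
    _ = (a' + b) + (c' + d) := by rw [h, h']
    _ = a' + c' + (b + d) := by abel)⟩

theorem mk_add_mk (a b c d : P) : mk a b + mk c d = mk (a + c) (b + d) := rfl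

instance : Neg (G P) :=
  ⟨Quotient.map (fun x => (x.2, x.1)) (by
    rintro ⟨a, b⟩ ⟨c, d⟩ h
    simp only [HasEquiv.Equiv, Setoid.r, rel] at *
    change a + d = c + b at h
    change b + c = d + a
    rw [add_comm b c, add_comm d a, ← h])⟩

theorem neg_mk (a b : P) : -(mk a b) = mk b a := rfl

instance : AddCommGroup (G P) where
  add_assoc := by
    intro x y z
    induction x using ind with | _ a b =>
    induction y using ind with | _ c d =>
    induction z using ind with | _ e f =>
    simp only [mk_add_mk, add_assoc]
  zero_add := by
    intro x
    induction x using ind with | _ a b =>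
    simp only [zero_def, mk_add_mk, zero_add]
  add_zero := by
    intro x
    induction x using ind with | _ a b =>
    simp only [zero_def, mk_add_mk, add_zero]
  add_comm := by
    intro x y
    induction x using ind with | _ a b =>
    induction y using ind with | _ c d =>
    simp only [mk_add_mk, add_comm]
  neg_add_cancel := by
    intro x
    induction x using ind with | _ a b =>
    rw [neg_mk, mk_add_mk, zero_def, mk_eq_mk]
    abel
  nsmul := nsmulRec
  zsmul := zsmulRec

/-- Scalar action by a formal difference `p - q` of nonnegative reals. -/
def pqsmul (p q : ℝ≥0) : G P → G P :=
  Quotient.map (fun x => (p • x.1 + q • x.2, p • x.2 + q • x.1)) (by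
    rintro ⟨a, b⟩ ⟨c, d⟩ h
    simp only [HasEquiv.Equiv, Setoid.r, rel] at *
    calc p • a + q • b + (p • d + q • c) = p • (a + d) + q • (b + c) := by
          simp only [smul_add]; abel
    _ = p • (c + b) + q • (d + a) := by rw [h, show b + c = c + b from add_comm _ _,
          show d + a = a + d from add_comm _ _, h]
    _ = p • c + q • d + (p • b + q • a) := by simp only [smul_add]; abel)

theorem pqsmul_mk (p q : ℝ≥0) (a b : P) :
    pqsmul p q (mk a b) = mk (p • a + q • b) (p • b + q • a) := rfl

theorem pqsmul_congr {p q p' q' : ℝ≥0} (h : (p : ℝ) - q = (p' : ℝ) - q') (x : G P) :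
    pqsmul p q x = pqsmul p' q' x := by
  have hpq : p + q' = p' + q := by
    have : (p : ℝ) + q' = (p' : ℝ) + q := by linarith
    exact_mod_cast this
  induction x using ind with | _ a b =>
  rw [pqsmul_mk, pqsmul_mk, mk_eq_mk]
  have key : ∀ z : P, p • z + q' • z = p' • z + q • z := by
    intro z
    rw [← add_smul, ← add_smul, hpq]
  calc p • a + q • b + (p' • b + q' • a) = (p • a + q' • a) + (q • b + p' • b) := by abel
  _ = (p' • a + q • a) + (q' • b + p • b) := by
        rw [key a, show q • b + p' • b = p' • b + q • b from add_comm _ _,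
          ← key b]; abel
  _ = p' • a + q' • b + (p • b + q • a) := by abel

noncomputable instance : SMul ℝ (G P) := ⟨fun r => pqsmul r.toNNReal (-r).toNNReal⟩

theorem rsmul_def (r : ℝ) (x : G P) : r • x = pqsmul r.toNNReal (-r).toNNReal x := rfl

theorem toNNReal_sub_toNNReal (r : ℝ) : ((r.toNNReal : ℝ)) - ((-r).toNNReal : ℝ) = r := by
  rcases le_or_gt 0 r with h | h
  · rw [Real.coe_toNNReal _ h, Real.toNNReal_of_nonpos (by linarith)]; simp
  · rw [Real.toNNReal_of_nonpos h.le, Real.coe_toNNReal _ (by linarith)]; simp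

theorem rsmul_eq_pqsmul {r : ℝ} {p q : ℝ≥0} (h : (p : ℝ) - q = r) (x : G P) :
    r • x = pqsmul p q x := by
  rw [rsmul_def]
  exact pqsmul_congr (by rw [h, toNNReal_sub_toNNReal]) x |>.symm

theorem nnsmul_mk (c : ℝ≥0) (a b : P) : (c : ℝ) • mk a b = mk (c • a) (c • b) := by
  rw [rsmul_eq_pqsmul (p := c) (q := 0) (by simp), pqsmul_mk]
  simp

set_option maxHeartbeats 1000000 in
noncomputable instance : Module ℝ (G P) where
  one_smul x := by
    induction x using ind with | _ a b =>
    rw [show (1 : ℝ) = ((1 : ℝ≥0) : ℝ) by norm_num, nnsmul_mk]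
    simp
  mul_smul r s x := by
    induction x using ind with | _ a b =>
    rw [rsmul_def s (mk a b), pqsmul_mk, rsmul_def r (mk (s.toNNReal • a + (-s).toNNReal • b) (s.toNNReal • b + (-s).toNNReal • a)), pqsmul_mk]
    rw [rsmul_eq_pqsmul (r := r * s)
      (p := r.toNNReal * s.toNNReal + (-r).toNNReal * (-s).toNNReal)
      (q := r.toNNReal * (-s).toNNReal + (-r).toNNReal * s.toNNReal)
      (by have hr := toNNReal_sub_toNNReal r
          have hs := toNNReal_sub_toNNReal s
          push_cast
          linear_combination (↑s.toNNReal - ↑(-s).toNNReal) * hr + r * hs), pqsmul_mk, mk_eq_mk]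
    simp only [add_smul, smul_add, mul_smul]
    abel
  smul_zero r := by
    rw [zero_def, rsmul_def r (mk 0 0), pqsmul_mk]
    simp
  smul_add r x y := by
    induction x using ind with | _ a b =>
    induction y using ind with | _ c d =>
    rw [mk_add_mk, rsmul_def r (mk (a + c) (b + d)), rsmul_def r (mk a b),
      rsmul_def r (mk c d), pqsmul_mk, pqsmul_mk, pqsmul_mk, mk_add_mk, mk_eq_mk]
    simp only [smul_add]
    abel
  add_smul r s x := by
    induction x using ind with | _ a b =>
    rw [rsmul_def r (mk a b), rsmul_def s (mk a b), pqsmul_mk, pqsmul_mk, mk_add_mk,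
      rsmul_eq_pqsmul (r := r + s) (p := r.toNNReal + s.toNNReal)
        (q := (-r).toNNReal + (-s).toNNReal)
        (by push_cast
            have hr := toNNReal_sub_toNNReal r
            have hs := toNNReal_sub_toNNReal s
            linarith), pqsmul_mk, mk_eq_mk]
    simp only [add_smul]
    abel
  zero_smul x := by
    induction x using ind with | _ a b =>
    rw [rsmul_eq_pqsmul (p := 0) (q := 0) (by simp), pqsmul_mk, zero_def, mk_eq_mk]
    simp

section Metric

variable [MetricSpace P]

theorem dist_eq_of_rel (htrans : ∀ x y z : P, dist (x + z) (y + z) = dist x y)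
    {a b c d : P} (h : a + d = c + b) : dist a b = dist c d := by
  calc dist a b = dist (a + d) (b + d) := (htrans a b d).symm
  _ = dist (c + b) (d + b) := by rw [h, add_comm b d]
  _ = dist c d := htrans c d b

/-- The Grothendieck norm on `G P`. -/
noncomputable def normG (htrans : ∀ x y z : P, dist (x + z) (y + z) = dist x y) :
    AddGroupNorm (G P) where
  toFun := Quotient.lift (fun p : P × P => dist p.1 p.2)
    (fun p q h => dist_eq_of_rel htrans h)
  map_zero' := dist_self 0
  add_le' := by
    intro x y
    induction x using ind with | _ a b =>
    induction y using ind with | _ c d =>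
    show dist (a + c) (b + d) ≤ dist a b + dist c d
    calc dist (a + c) (b + d) ≤ dist (a + c) (b + c) + dist (b + c) (b + d) :=
          dist_triangle _ _ _
    _ = dist a b + dist c d := by
          rw [htrans a b c, show b + c = c + b from add_comm _ _,
            show b + d = d + b from add_comm _ _, htrans c d b]
  neg' := by
    intro x
    induction x using ind with | _ a b =>
    exact dist_comm b a
  eq_zero_of_map_eq_zero' := by
    intro x
    induction x using ind with | _ a b =>
    intro h
    have : a = b := eq_of_dist_eq_zero h
    rw [zero_def, mk_eq_mk, this, add_zero, zero_add]

theorem normG_mk (htrans : ∀ x y z : P, dist (x + z) (y + z) = dist x y) (a b : P) :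
    normG htrans (mk a b) = dist a b := rfl

end Metric

end Stmt19Aux


/-- (1) On a subset of a normed space closed under addition and nonnegative
scaling, the norm metric is translation-invariant and `1`-homogeneous.
(2) Conversely, a cancellative convex cone with a complete,
translation-invariant, `1`-homogeneous metric embeds isometrically as a
closed convex cone in a Banach space. -/
theorem stmt_19 :
    (∀ (B : Type) (_ : NormedAddCommGroup B), ∀ (_ : NormedSpace ℝ B) (P : Set B),
      (∀ x ∈ P, ∀ y ∈ P, x + y ∈ P) →
      (∀ c : ℝ, 0 ≤ c → ∀ x ∈ P, c • x ∈ P) →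
      (∀ x ∈ P, ∀ y ∈ P, ∀ z ∈ P, dist (x + z) (y + z) = dist x y) ∧
      (∀ c : ℝ, 0 ≤ c → ∀ x ∈ P, ∀ y ∈ P, dist (c • x) (c • y) = c * dist x y)) ∧
    (∀ (P : Type) (_ : AddCommMonoid P) (_ : IsCancelAdd P) (_ : Module ℝ≥0 P)
        (_ : MetricSpace P) (_ : CompleteSpace P),
      (∀ x y z : P, dist (x + z) (y + z) = dist x y) →
      (∀ (c : ℝ≥0) (x y : P), dist (c • x) (c • y) = (c : ℝ) * dist x y) →
      Nonempty (BanachConeEmbedding P)) := by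
  constructor
  · intro B _ _ P _ _
    constructor
    · intro x _ y _ z _
      exact dist_add_right x y z
    · intro c hc x _ y _
      rw [dist_smul₀, Real.norm_of_nonneg hc]
  · intro P _ _ _ _ _ htrans hsmul
    classical
    letI : NormedAddCommGroup (Stmt19Aux.G P) :=
      AddGroupNorm.toNormedAddCommGroup (Stmt19Aux.normG htrans)
    have norm_mk : ∀ a b : P, ‖Stmt19Aux.mk a b‖ = dist a b := fun a b => rfl
    letI : NormedSpace ℝ (Stmt19Aux.G P) := by
      refine ⟨?_⟩
      intro r x
      induction x using Stmt19Aux.ind with | _ a b =>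
      rcases le_or_gt 0 r with hr | hr
      · rw [Stmt19Aux.rsmul_eq_pqsmul (p := r.toNNReal) (q := 0)
          (by rw [Real.coe_toNNReal _ hr]; simp), Stmt19Aux.pqsmul_mk]
        simp only [zero_smul, add_zero]
        rw [norm_mk, norm_mk, hsmul, Real.coe_toNNReal _ hr, Real.norm_of_nonneg hr]
      · rw [Stmt19Aux.rsmul_eq_pqsmul (p := 0) (q := (-r).toNNReal)
          (by rw [Real.coe_toNNReal _ (by linarith)]; simp), Stmt19Aux.pqsmul_mk]
        simp only [zero_smul, zero_add]
        rw [norm_mk, norm_mk, hsmul, Real.coe_toNNReal _ (by linarith),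
          Real.norm_of_nonpos hr.le, dist_comm a b]
    refine ⟨⟨UniformSpace.Completion (Stmt19Aux.G P), inferInstance,
      fun x => ((Stmt19Aux.mk x 0 : Stmt19Aux.G P) : UniformSpace.Completion (Stmt19Aux.G P)),
      ?_, ?_, ?_, ?_⟩⟩
    · intro x y
      rw [UniformSpace.Completion.dist_eq, dist_eq_norm]
      have : Stmt19Aux.mk x 0 - Stmt19Aux.mk y 0 = Stmt19Aux.mk x y := by
        rw [sub_eq_add_neg, Stmt19Aux.neg_mk, Stmt19Aux.mk_add_mk, add_zero, zero_add]
      rw [this, norm_mk]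
    · intro x y
      rw [← UniformSpace.Completion.coe_add, Stmt19Aux.mk_add_mk, add_zero]
    · intro c x
      rw [← UniformSpace.Completion.coe_smul, Stmt19Aux.nnsmul_mk, smul_zero]
    · have hisom : Isometry (fun x : P =>
          ((Stmt19Aux.mk x 0 : Stmt19Aux.G P) : UniformSpace.Completion (Stmt19Aux.G P))) := by
        apply Isometry.of_dist_eq
        intro x y
        rw [UniformSpace.Completion.dist_eq, dist_eq_norm]
        have : Stmt19Aux.mk x 0 - Stmt19Aux.mk y 0 = Stmt19Aux.mk x y := by
          rw [sub_eq_add_neg, Stmt19Aux.neg_mk, Stmt19Aux.mk_add_mk, add_zero, zero_add]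
        rw [this, norm_mk]
      exact hisom.isClosedEmbedding.isClosed_range
end
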